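/- Let κ ∈ [0,1) and x ∈ S. Then for every z ∈ [0, r(U^S_κ|x,x)), the U-function of the (S,κ)-lazy version P^S_κ = κI + (1−κ)P satisfies U^S_κ(x,x|z) = (1 − κz)·U(x,x | (1−κ)z/(1−κz)) + κz, and moreover 1/r(U^S_κ|x,x) = κ + (1−κ)/r(U|x,x). -/

import Mathlib

open scoped Classical ENNReal NNReal

variable {S : Type*}

/-- The `n`-step transition probabilities `P^n(x,y)` (n-th matrix power of `P`). -/
noncomputable def kpow (P : S → S → ℝ) : ℕ → S → S → ℝ
  | 0, x, y => if x = y then 1 else 0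
  | n+1, x, y => ∑' w, P x w * kpow P n w y

/-- `P` is a transition probability: nonnegative entries and each row sums to `1`. -/
def IsTransProb (P : S → S → ℝ) : Prop :=
  (∀ x y, 0 ≤ P x y) ∧ ∀ x, HasSum (P x) 1

/-- `P` is irreducible: for all `x, y` there is `n ≥ 0` with `P^n(x,y) > 0`. -/
def Irred (P : S → S → ℝ) : Prop :=
  ∀ x y, ∃ n, 0 < kpow P n x y

/-- The Green function `G(x,y|z) = ∑_{n ≥ 0} P^n(x,y) zⁿ`, a sum in `[0,∞]`. -/
noncomputable def green (P : S → S → ℝ) (x y : S) (z : ℝ) : ℝ≥0∞ :=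
  ∑' n, ENNReal.ofReal (kpow P n x y * z ^ n)

/-- Radius of convergence of the power series with coefficients `a`,
as the supremum (in `[0,∞]`) of the nonnegative `z` at which the series converges. -/
noncomputable def convRadius (a : ℕ → ℝ) : ℝ≥0∞ :=
  ⨆ (z : ℝ≥0) (_ : Summable fun n => a n * (z : ℝ) ^ n), (z : ℝ≥0∞)

/-- The spectral radius as an extended nonnegative real: the reciprocal of the
radius of convergence of `G(x,x|·)` (independent of `x` when `P` is irreducible). -/
noncomputable def specRadiusE (P : S → S → ℝ) : ℝ≥0∞ :=
  ⨆ x, (convRadius fun n => kpow P n x x)⁻¹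

/-- The spectral radius `ρ` of `P`. -/
noncomputable def specRadius (P : S → S → ℝ) : ℝ :=
  (specRadiusE P).toReal

/-- The `(L,κ)`-lazy version `P^L_κ` of `P`:
`P^L_κ(x,y) = κ·1_{x=y} + (1-κ)P(x,y)` for `x ∈ L`, and `P^L_κ(x,y) = P(x,y)` for `x ∉ L`. -/
noncomputable def lazy (P : S → S → ℝ) (L : Set S) (κ : ℝ) : S → S → ℝ :=
  fun x y => if x ∈ L then (if x = y then κ else 0) + (1 - κ) * P x y else P x y

/-- First-return probabilities: `u_0(x,y) = 0`, `u_1(x,y) = P(x,y)`, and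
`u_n(x,y) = ∑_{w ≠ y} P(x,w) u_{n-1}(w,y)` for `n ≥ 2`. -/
noncomputable def fret (P : S → S → ℝ) : ℕ → S → S → ℝ
  | 0, _, _ => 0
  | 1, x, y => P x y
  | n+2, x, y => ∑' w, if w = y then 0 else P x w * fret P (n+1) w y

/-- The U-function `U(x,y|z) = ∑_{n ≥ 0} u_n(x,y) zⁿ`, a sum in `[0,∞]`. -/
noncomputable def Ufun (P : S → S → ℝ) (x y : S) (z : ℝ) : ℝ≥0∞ :=
  ∑' n, ENNReal.ofReal (fret P n x y * z ^ n)

/-- `r(U|x,y)`, the radius of convergence of `U(x,y|·)`. -/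
noncomputable def rU (P : S → S → ℝ) (x y : S) : ℝ≥0∞ :=
  convRadius fun n => fret P n x y

/-- `P` is rho-recurrent if `G(x,x|1/ρ) = ∞` (for all, equivalently some, `x`). -/
def RhoRecurrent (P : S → S → ℝ) : Prop :=
  ∀ x, green P x x (specRadius P)⁻¹ = ∞

/-- `P` is rho-transient if `G(x,x|1/ρ) < ∞` (for all, equivalently some, `x`). -/
def RhoTransient (P : S → S → ℝ) : Prop :=
  ∀ x, green P x x (specRadius P)⁻¹ ≠ ∞

/-- A rho-recurrent `P` is strictly rho-recurrent if `r(U|x,x) > 1/ρ` for some `x`. -/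
def StrictlyRhoRecurrent (P : S → S → ℝ) : Prop :=
  RhoRecurrent P ∧ ∃ x, ENNReal.ofReal (specRadius P)⁻¹ < rU P x x

/-- A rho-recurrent `P` is critically rho-recurrent if `r(U|x,x) = 1/ρ` for all `x`. -/
def CriticallyRhoRecurrent (P : S → S → ℝ) : Prop :=
  RhoRecurrent P ∧ ∀ x, rU P x x = ENNReal.ofReal (specRadius P)⁻¹

section Aux
variable {P : S → S → ℝ}

lemma fret_zero (P : S → S → ℝ) (x y : S) : fret P 0 x y = 0 := by simp [fret]

lemma fret_one (P : S → S → ℝ) (x y : S) : fret P 1 x y = P x y := by simp [fret]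

lemma fret_succ_succ (P : S → S → ℝ) (n : ℕ) (x y : S) :
    fret P (n+2) x y = ∑' w, if w = y then 0 else P x w * fret P (n+1) w y := by rw [fret]

lemma entry_le_one (hP : IsTransProb P) (x y : S) : P x y ≤ 1 :=
  le_hasSum (hP.2 x) y (fun j _ => hP.1 x j)

lemma fret_bounds (hP : IsTransProb P) :
    ∀ n, ∀ x y : S, 0 ≤ fret P n x y ∧ fret P n x y ≤ 1 := by
  intro n
  induction n using Nat.strong_induction_on with
  | _ n ih =>
    match n with
    | 0 => intro x y; simp [fret]
    | 1 => intro x y; exact ⟨hP.1 x y, entry_le_one hP x y⟩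
    | (m+2) =>
      intro x y
      have hle : ∀ w, (if w = y then 0 else P x w * fret P (m+1) w y) ≤ P x w := by
        intro w
        by_cases h : w = y
        · simp only [h, if_pos]; exact hP.1 x y
        · simp only [h, if_neg, ite_false]
          calc P x w * fret P (m+1) w y ≤ P x w * 1 :=
                mul_le_mul_of_nonneg_left (ih (m+1) (by omega) w y).2 (hP.1 x w)
            _ = P x w := mul_one _
      have hnn : ∀ w, 0 ≤ (if w = y then 0 else P x w * fret P (m+1) w y) := by
        intro w
        by_cases h : w = y
        · simp [h]
        · simp only [h, ite_false]
          exact mul_nonneg (hP.1 x w) (ih (m+1) (by omega) w y).1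
      have hsum : Summable (fun w => if w = y then 0 else P x w * fret P (m+1) w y) :=
        Summable.of_nonneg_of_le hnn hle (hP.2 x).summable
      rw [fret_succ_succ]
      refine ⟨tsum_nonneg hnn, ?_⟩
      calc ∑' w, (if w = y then 0 else P x w * fret P (m+1) w y)
          ≤ ∑' w, P x w := Summable.tsum_le_tsum hle hsum (hP.2 x).summable
        _ = 1 := (hP.2 x).tsum_eq

lemma fret_nonneg (hP : IsTransProb P) (n : ℕ) (x y : S) : 0 ≤ fret P n x y :=
  (fret_bounds hP n x y).1

lemma fret_le_one (hP : IsTransProb P) (n : ℕ) (x y : S) : fret P n x y ≤ 1 :=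
  (fret_bounds hP n x y).2

lemma fret_row_nonneg (hP : IsTransProb P) (n : ℕ) (x y : S) :
    ∀ w, 0 ≤ (if w = y then 0 else P x w * fret P n w y) := by
  intro w
  by_cases h : w = y
  · simp [h]
  · simp only [h, ite_false]
    exact mul_nonneg (hP.1 x w) (fret_nonneg hP n w y)

lemma fret_row_le (hP : IsTransProb P) (n : ℕ) (x y : S) :
    ∀ w, (if w = y then 0 else P x w * fret P n w y) ≤ P x w := by
  intro w
  by_cases h : w = y
  · simp only [h, if_pos]; exact hP.1 x y
  · simp only [h, ite_false]
    calc P x w * fret P n w y ≤ P x w * 1 :=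
        mul_le_mul_of_nonneg_left (fret_le_one hP n w y) (hP.1 x w)
      _ = P x w := mul_one _

lemma summable_fret_row (hP : IsTransProb P) (n : ℕ) (x y : S) :
    Summable (fun w => if w = y then 0 else P x w * fret P n w y) :=
  Summable.of_nonneg_of_le (fret_row_nonneg hP n x y) (fret_row_le hP n x y) (hP.2 x).summable

lemma lazy_univ_apply (P : S → S → ℝ) (κ : ℝ) (x y : S) :
    lazy P Set.univ κ x y = (if x = y then κ else 0) + (1 - κ) * P x y := by
  simp [lazy]

lemma lazy_isTransProb (hP : IsTransProb P) {κ : ℝ} (hκ : κ ∈ Set.Ico (0:ℝ) 1) :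
    IsTransProb (lazy P Set.univ κ) := by
  obtain ⟨hκ0, hκ1⟩ := hκ
  constructor
  · intro x y
    rw [lazy_univ_apply]
    refine add_nonneg ?_ (mul_nonneg (by linarith) (hP.1 x y))
    by_cases h : x = y
    · simpa [h] using hκ0
    · simp [h]
  · intro x
    have h1 : HasSum (fun y => if x = y then κ else 0) κ := by
      have : (fun y => if x = y then κ else 0) = (fun y => if y = x then κ else 0) := by
        funext y; simp [eq_comm]
      rw [this]
      exact hasSum_ite_eq x κ
    have h2 : HasSum (fun y => (1 - κ) * P x y) (1 - κ) := by
      simpa using (hP.2 x).mul_left (1 - κ)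
    have h3 := h1.add h2
    have h4 : lazy P Set.univ κ x = fun y => (if x = y then κ else 0) + (1 - κ) * P x y :=
      funext (lazy_univ_apply P κ x)
    rw [h4]
    convert h3 using 1
    ring

end Aux

section Pascal

lemma pascal_sum (n : ℕ) (κ : ℝ) (g : ℕ → ℝ) :
    κ * (∑ k ∈ Finset.range (n+1), (n.choose k : ℝ) * κ ^ (n - k) * g k)
      + ∑ k ∈ Finset.range (n+1), (n.choose k : ℝ) * κ ^ (n - k) * g (k+1)
    = ∑ k ∈ Finset.range (n+2), ((n+1).choose k : ℝ) * κ ^ (n+1-k) * g k := by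
  have hR : ∑ k ∈ Finset.range (n+2), ((n+1).choose k : ℝ) * κ ^ (n+1-k) * g k
      = (∑ k ∈ Finset.range (n+1), ((n+1).choose (k+1) : ℝ) * κ ^ (n-k) * g (k+1))
        + (n.choose 0 : ℝ) * κ ^ (n+1) * g 0 := by
    rw [Finset.sum_range_succ' (fun k => ((n+1).choose k : ℝ) * κ ^ (n+1-k) * g k) (n+1)]
    simp [Nat.succ_sub_succ]
  have hsplit : ∀ k, ((n+1).choose (k+1) : ℝ) = (n.choose k : ℝ) + (n.choose (k+1) : ℝ) := by
    intro k; rw [Nat.choose_succ_succ]; push_cast; ring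
  have hR2 : ∑ k ∈ Finset.range (n+1), ((n+1).choose (k+1) : ℝ) * κ ^ (n-k) * g (k+1)
      = (∑ k ∈ Finset.range (n+1), (n.choose k : ℝ) * κ ^ (n-k) * g (k+1))
        + ∑ k ∈ Finset.range (n+1), (n.choose (k+1) : ℝ) * κ ^ (n-k) * g (k+1) := by
    rw [← Finset.sum_add_distrib]
    refine Finset.sum_congr rfl fun k hk => ?_
    rw [hsplit k]; ring
  have hL : κ * (∑ k ∈ Finset.range (n+1), (n.choose k : ℝ) * κ ^ (n - k) * g k)
      = ∑ k ∈ Finset.range (n+1), (n.choose k : ℝ) * κ ^ (n + 1 - k) * g k := by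
    rw [Finset.mul_sum]
    refine Finset.sum_congr rfl fun k hk => ?_
    have hk' : k ≤ n := by simpa [Nat.lt_succ_iff] using hk
    have : n + 1 - k = (n - k) + 1 := by omega
    rw [this, pow_succ]
    ring
  have hL2 : ∑ k ∈ Finset.range (n+1), (n.choose k : ℝ) * κ ^ (n + 1 - k) * g k
      = (∑ k ∈ Finset.range n, (n.choose (k+1) : ℝ) * κ ^ (n-k) * g (k+1))
        + (n.choose 0 : ℝ) * κ ^ (n+1) * g 0 := by
    rw [Finset.sum_range_succ' (fun k => (n.choose k : ℝ) * κ ^ (n+1-k) * g k) n]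
    simp [Nat.succ_sub_succ]
  have hext : ∑ k ∈ Finset.range (n+1), (n.choose (k+1) : ℝ) * κ ^ (n-k) * g (k+1)
      = ∑ k ∈ Finset.range n, (n.choose (k+1) : ℝ) * κ ^ (n-k) * g (k+1) := by
    rw [Finset.sum_range_succ]
    simp
  rw [hR, hR2, hL, hL2, hext]
  ring

end Pascal

section LazyFormula
variable {P : S → S → ℝ} {κ : ℝ}

lemma summable_row_mul (hP : IsTransProb P) (x w : S) {c : S → ℝ}
    (h0 : ∀ v, 0 ≤ c v) (h1 : ∀ v, c v ≤ 1) :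
    Summable (fun v => if v = x then 0 else P w v * c v) := by
  refine Summable.of_nonneg_of_le (fun v => ?_) (fun v => ?_) (hP.2 w).summable
  · by_cases h : v = x
    · simp [h]
    · simp only [h, ite_false]; exact mul_nonneg (hP.1 w v) (h0 v)
  · by_cases h : v = x
    · simp only [h, if_pos]; exact hP.1 w x
    · simp only [h, ite_false]
      calc P w v * c v ≤ P w v * 1 := mul_le_mul_of_nonneg_left (h1 v) (hP.1 w v)
        _ = P w v := mul_one _

lemma tsum_row_fret (hP : IsTransProb P) (n : ℕ) (x w : S) :
    ∑' v, (if v = x then 0 else P w v * fret P (n+1) v x) = fret P (n+2) w x :=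
  (fret_succ_succ P n w x).symm

lemma fret_lazy_ne (hP : IsTransProb P) (hκ : κ ∈ Set.Ico (0:ℝ) 1) (x : S) :
    ∀ n : ℕ, ∀ w : S, w ≠ x →
      fret (lazy P Set.univ κ) (n+1) w x
        = ∑ k ∈ Finset.range (n+1),
            (n.choose k : ℝ) * κ ^ (n-k) * ((1-κ)^(k+1) * fret P (k+1) w x) := by
  have hQ : IsTransProb (lazy P Set.univ κ) := lazy_isTransProb hP hκ
  set Q := lazy P Set.univ κ with hQdef
  intro n
  induction n with
  | zero =>
      intro w hw
      simp [fret_one, hQdef, lazy_univ_apply, hw]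
  | succ n ih =>
      intro w hw
      have hsplit : ∀ v, (if v = x then 0 else Q w v * fret Q (n+1) v x)
          = (if v = x then 0 else (if w = v then κ else 0) * fret Q (n+1) v x)
            + (if v = x then 0 else (1-κ) * (P w v * fret Q (n+1) v x)) := by
        intro v
        by_cases h : v = x
        · simp [h]
        · simp only [h, ite_false, hQdef, lazy_univ_apply]; ring
      have hs1 : Summable (fun v => if v = x then 0 else (if w = v then κ else 0) * fret Q (n+1) v x) := by
        apply summable_of_ne_finset_zero (s := {w})
        intro v hv
        simp only [Finset.mem_singleton] at hv
        have hwv : ¬ (w = v) := fun h => hv h.symm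
        simp [hwv]
      have hg : Summable (fun v => if v = x then 0 else P w v * fret Q (n+1) v x) :=
        summable_row_mul hP x w (fun v => fret_nonneg hQ (n+1) v x) (fun v => fret_le_one hQ (n+1) v x)
      have hs2 : Summable (fun v => if v = x then 0 else (1-κ) * (P w v * fret Q (n+1) v x)) := by
        have he : (fun v => if v = x then 0 else (1-κ) * (P w v * fret Q (n+1) v x))
            = fun v => (1-κ) * (if v = x then 0 else P w v * fret Q (n+1) v x) := by
          funext v; by_cases h : v = x <;> simp [h]
        rw [he]
        exact hg.mul_left (1-κ)
      have step1 : fret Q (n+2) w x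
          = κ * fret Q (n+1) w x
            + (1-κ) * ∑' v, (if v = x then 0 else P w v * fret Q (n+1) v x) := by
        rw [fret_succ_succ]
        calc ∑' v, (if v = x then 0 else Q w v * fret Q (n+1) v x)
            = ∑' v, ((if v = x then 0 else (if w = v then κ else 0) * fret Q (n+1) v x)
              + (if v = x then 0 else (1-κ) * (P w v * fret Q (n+1) v x))) :=
              tsum_congr hsplit
          _ = (∑' v, (if v = x then 0 else (if w = v then κ else 0) * fret Q (n+1) v x))
              + ∑' v, (if v = x then 0 else (1-κ) * (P w v * fret Q (n+1) v x)) :=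
              Summable.tsum_add hs1 hs2
          _ = κ * fret Q (n+1) w x
              + (1-κ) * ∑' v, (if v = x then 0 else P w v * fret Q (n+1) v x) := by
              congr 1
              · rw [tsum_eq_single w]
                · simp [hw]
                · intro v hv
                  have hwv : ¬ (w = v) := fun h => hv h.symm
                  simp [hwv]
              · rw [show (fun v => if v = x then 0 else (1-κ) * (P w v * fret Q (n+1) v x))
                    = fun v => (1-κ) * (if v = x then 0 else P w v * fret Q (n+1) v x) from
                    funext fun v => by by_cases h : v = x <;> simp [h]]
                exact tsum_mul_left
      have step2 : ∑' v, (if v = x then 0 else P w v * fret Q (n+1) v x)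
          = ∑ k ∈ Finset.range (n+1),
              ((n.choose k : ℝ) * κ ^ (n-k) * (1-κ)^(k+1)) * fret P (k+2) w x := by
        have hpt : ∀ v, (if v = x then 0 else P w v * fret Q (n+1) v x)
            = ∑ k ∈ Finset.range (n+1),
                ((n.choose k : ℝ) * κ ^ (n-k) * (1-κ)^(k+1))
                  * (if v = x then 0 else P w v * fret P (k+1) v x) := by
          intro v
          by_cases h : v = x
          · simp [h]
          · rw [if_neg h, ih v h, Finset.mul_sum]
            refine Finset.sum_congr rfl fun k hk => ?_
            rw [if_neg h]; ring
        rw [tsum_congr hpt,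
          Summable.tsum_finsetSum (fun k _ => Summable.mul_left _
            (summable_row_mul hP x w (fun v => fret_nonneg hP (k+1) v x)
              (fun v => fret_le_one hP (k+1) v x)))]
        refine Finset.sum_congr rfl fun k hk => ?_
        rw [tsum_mul_left, tsum_row_fret hP k x w]
      rw [step1, ih w hw, step2]
      have hlast : (1-κ) * ∑ k ∈ Finset.range (n+1),
            ((n.choose k : ℝ) * κ ^ (n-k) * (1-κ)^(k+1)) * fret P (k+2) w x
          = ∑ k ∈ Finset.range (n+1),
              (n.choose k : ℝ) * κ ^ (n-k) * ((1-κ)^(k+2) * fret P (k+2) w x) := by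
        rw [Finset.mul_sum]
        refine Finset.sum_congr rfl fun k hk => ?_
        ring
      rw [hlast]
      exact pascal_sum n κ (fun k => (1-κ)^(k+1) * fret P (k+1) w x)

lemma fret_lazy_self (hP : IsTransProb P) (hκ : κ ∈ Set.Ico (0:ℝ) 1) (x : S) (n : ℕ) :
    fret (lazy P Set.univ κ) (n+2) x x
      = ∑ k ∈ Finset.range (n+1),
          (n.choose k : ℝ) * κ ^ (n-k) * ((1-κ)^(k+2) * fret P (k+2) x x) := by
  have hQ : IsTransProb (lazy P Set.univ κ) := lazy_isTransProb hP hκ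
  set Q := lazy P Set.univ κ with hQdef
  have hpt : ∀ v, (if v = x then 0 else Q x v * fret Q (n+1) v x)
      = (1-κ) * ∑ k ∈ Finset.range (n+1),
          ((n.choose k : ℝ) * κ ^ (n-k) * (1-κ)^(k+1))
            * (if v = x then 0 else P x v * fret P (k+1) v x) := by
    intro v
    by_cases h : v = x
    · simp [h]
    · have hxv : ¬ (x = v) := fun hh => h hh.symm
      rw [if_neg h, hQdef, lazy_univ_apply, if_neg hxv, zero_add,
        fret_lazy_ne hP hκ x n v h, Finset.mul_sum, Finset.mul_sum]
      refine Finset.sum_congr rfl fun k hk => ?_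
      rw [if_neg h]; ring
  rw [fret_succ_succ, tsum_congr hpt, tsum_mul_left,
    Summable.tsum_finsetSum (fun k _ => Summable.mul_left _
      (summable_row_mul hP x x (fun v => fret_nonneg hP (k+1) v x)
        (fun v => fret_le_one hP (k+1) v x))),
    Finset.mul_sum]
  refine Finset.sum_congr rfl fun k hk => ?_
  rw [tsum_mul_left, tsum_row_fret hP k x x]
  ring

end LazyFormula

section Positivity
variable {P : S → S → ℝ}

lemma kpow_nonneg (hP : IsTransProb P) : ∀ n, ∀ x y : S, 0 ≤ kpow P n x y := by
  intro n
  induction n with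
  | zero => intro x y; by_cases h : x = y <;> simp [kpow, h]
  | succ n ih =>
      intro x y
      rw [show kpow P (n+1) x y = ∑' w, P x w * kpow P n w y from by rw [kpow]]
      exact tsum_nonneg fun w => mul_nonneg (hP.1 x w) (ih w y)

lemma exists_pos_of_tsum_pos {f : S → ℝ} (h : 0 < ∑' w, f w) : ∃ w, 0 < f w := by
  by_contra hc
  push_neg at hc
  exact absurd (tsum_nonpos hc) (not_le.mpr h)

lemma pos_of_mul_pos_nonneg {a b : ℝ} (h : 0 < a * b) (ha : 0 ≤ a) (hb : 0 ≤ b) :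
    0 < a ∧ 0 < b := by
  rcases mul_pos_iff.mp h with ⟨h1, h2⟩ | ⟨h1, h2⟩
  · exact ⟨h1, h2⟩
  · exact absurd h1 (not_lt.mpr ha)

lemma exists_fret_pos_of_kpow_pos (hP : IsTransProb P) (x : S) :
    ∀ c, ∀ w : S, w ≠ x → 0 < kpow P c w x → ∃ j, 0 < fret P (j+1) w x := by
  intro c
  induction c with
  | zero =>
      intro w hw hpos
      simp [kpow, hw] at hpos
  | succ c ih =>
      intro w hw hpos
      rw [show kpow P (c+1) w x = ∑' v, P w v * kpow P c v x from by rw [kpow]] at hpos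
      obtain ⟨v, hv⟩ := exists_pos_of_tsum_pos hpos
      obtain ⟨hPwv, hkv⟩ := pos_of_mul_pos_nonneg hv (hP.1 w v) (kpow_nonneg hP c v x)
      by_cases hvx : v = x
      · exact ⟨0, by rw [fret_one]; rw [hvx] at hPwv; exact hPwv⟩
      · obtain ⟨j, hj⟩ := ih v hvx hkv
        refine ⟨j+1, ?_⟩
        rw [show j+1+1 = j+2 from rfl, fret_succ_succ]
        have hterm : 0 < (if v = x then 0 else P w v * fret P (j+1) v x) := by
          rw [if_neg hvx]; exact mul_pos hPwv hj
        calc (0:ℝ) < (if v = x then 0 else P w v * fret P (j+1) v x) := hterm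
          _ ≤ ∑' u, (if u = x then 0 else P w u * fret P (j+1) u x) :=
            Summable.le_tsum (summable_fret_row hP (j+1) w x) v
              (fun u _ => fret_row_nonneg hP (j+1) w x u)

lemma exists_exit (hP : IsTransProb P) (x y : S) (hxy : y ≠ x) :
    ∀ a, 0 < kpow P a x y → ∃ w, w ≠ x ∧ 0 < P x w := by
  intro a
  induction a with
  | zero =>
      intro h
      have : ¬ (x = y) := fun hh => hxy hh.symm
      simp [kpow, this] at h
  | succ a ih =>
      intro h
      rw [show kpow P (a+1) x y = ∑' v, P x v * kpow P a v y from by rw [kpow]] at h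
      obtain ⟨v, hv⟩ := exists_pos_of_tsum_pos h
      obtain ⟨h1, h2⟩ := pos_of_mul_pos_nonneg hv (hP.1 x v) (kpow_nonneg hP a v y)
      by_cases hvx : v = x
      · exact ih (by rwa [hvx] at h2)
      · exact ⟨v, hvx, h1⟩

lemma exists_fret_self_pos [Infinite S] (hP : IsTransProb P) (hirr : Irred P) (x : S) :
    ∃ k, 0 < fret P (k+2) x x := by
  obtain ⟨y, hy⟩ := exists_ne x
  obtain ⟨a, ha⟩ := hirr x y
  obtain ⟨w, hwx, hPxw⟩ := exists_exit hP x y hy a ha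
  obtain ⟨c, hc⟩ := hirr w x
  obtain ⟨j, hj⟩ := exists_fret_pos_of_kpow_pos hP x c w hwx hc
  refine ⟨j, ?_⟩
  rw [fret_succ_succ]
  have hterm : 0 < (if w = x then 0 else P x w * fret P (j+1) w x) := by
    rw [if_neg hwx]; exact mul_pos hPxw hj
  calc (0:ℝ) < (if w = x then 0 else P x w * fret P (j+1) w x) := hterm
    _ ≤ ∑' u, (if u = x then 0 else P x u * fret P (j+1) u x) :=
      Summable.le_tsum (summable_fret_row hP (j+1) x x) w
        (fun u _ => fret_row_nonneg hP (j+1) x x u)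

end Positivity

section SummableOfReal

lemma summable_iff_tsum_ofReal_ne_top {f : ℕ → ℝ} (hf : ∀ n, 0 ≤ f n) :
    Summable f ↔ ∑' n, ENNReal.ofReal (f n) ≠ ∞ := by
  constructor
  · intro h
    rw [← ENNReal.ofReal_tsum_of_nonneg hf h]
    exact ENNReal.ofReal_ne_top
  · intro h
    have h2 : Summable (fun n => (f n).toNNReal) := by
      rw [← ENNReal.tsum_coe_ne_top_iff_summable]
      exact h
    have h3 : (fun n => ((f n).toNNReal : ℝ)) = f := by
      funext n; exact Real.coe_toNNReal _ (hf n)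
    rw [← h3]
    exact NNReal.summable_coe.mpr h2

lemma tsum_choose_geom_ennreal (k : ℕ) {t : ℝ} (h0 : 0 ≤ t) (h1 : t < 1) :
    ∑' (j:ℕ), ENNReal.ofReal (((j+k).choose k : ℝ) * t ^ j)
      = ENNReal.ofReal (1 / (1-t)^(k+1)) := by
  have hnorm : ‖t‖ < 1 := by rwa [Real.norm_eq_abs, abs_of_nonneg h0]
  rw [← tsum_choose_mul_geometric_of_norm_lt_one k hnorm,
    ENNReal.ofReal_tsum_of_nonneg
      (fun j => mul_nonneg (Nat.cast_nonneg _) (pow_nonneg h0 j))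
      (summable_choose_mul_geometric_of_norm_lt_one k hnorm)]

end SummableOfReal

section Master
variable {P : S → S → ℝ} {κ : ℝ}

lemma tail_eval (hP : IsTransProb P) (hκ : κ ∈ Set.Ico (0:ℝ) 1) (x : S)
    {z : ℝ} (hz : 0 ≤ z) (hκz : κ * z < 1) :
    ∑' m : ℕ, ENNReal.ofReal (fret (lazy P Set.univ κ) (m+2) x x * z^(m+2))
      = ∑' k : ℕ, ENNReal.ofReal
          (fret P (k+2) x x * ((1-κ)*z)^(k+2) / (1-κ*z)^(k+1)) := by
  obtain ⟨hκ0, hκ1⟩ := hκ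
  have hκz0 : 0 ≤ κ * z := mul_nonneg hκ0 hz
  have h1κ : (0:ℝ) ≤ 1 - κ := by linarith
  have hnn : ∀ m k : ℕ,
      0 ≤ (m.choose k : ℝ) * κ ^ (m-k) * ((1-κ)^(k+2) * fret P (k+2) x x) * z^(m+2) :=
    fun m k => mul_nonneg (mul_nonneg (mul_nonneg (Nat.cast_nonneg _) (pow_nonneg hκ0 _))
      (mul_nonneg (pow_nonneg h1κ _) (fret_nonneg hP _ x x))) (pow_nonneg hz _)
  have step1 : ∀ m : ℕ, ENNReal.ofReal (fret (lazy P Set.univ κ) (m+2) x x * z^(m+2))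
      = ∑ k ∈ Finset.range (m+1), ENNReal.ofReal
          ((m.choose k : ℝ) * κ ^ (m-k) * ((1-κ)^(k+2) * fret P (k+2) x x) * z^(m+2)) := by
    intro m
    rw [fret_lazy_self hP ⟨hκ0, hκ1⟩ x m, Finset.sum_mul,
      ENNReal.ofReal_sum_of_nonneg (fun k _ => hnn m k)]
  have step2 : ∀ m : ℕ, ∑ k ∈ Finset.range (m+1), ENNReal.ofReal
          ((m.choose k : ℝ) * κ ^ (m-k) * ((1-κ)^(k+2) * fret P (k+2) x x) * z^(m+2))
      = ∑' k : ℕ, (if k ∈ Finset.range (m+1) then ENNReal.ofReal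
          ((m.choose k : ℝ) * κ ^ (m-k) * ((1-κ)^(k+2) * fret P (k+2) x x) * z^(m+2)) else 0) := by
    intro m
    rw [tsum_eq_sum (s := Finset.range (m+1)) (fun b hb => if_neg hb)]
    exact Finset.sum_congr rfl fun b hb => (if_pos hb).symm
  calc ∑' m : ℕ, ENNReal.ofReal (fret (lazy P Set.univ κ) (m+2) x x * z^(m+2))
      = ∑' m : ℕ, ∑' k : ℕ, (if k ∈ Finset.range (m+1) then ENNReal.ofReal
          ((m.choose k : ℝ) * κ ^ (m-k) * ((1-κ)^(k+2) * fret P (k+2) x x) * z^(m+2)) else 0) := by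
        refine tsum_congr fun m => ?_
        rw [step1 m, step2 m]
    _ = ∑' k : ℕ, ∑' m : ℕ, (if k ∈ Finset.range (m+1) then ENNReal.ofReal
          ((m.choose k : ℝ) * κ ^ (m-k) * ((1-κ)^(k+2) * fret P (k+2) x x) * z^(m+2)) else 0) :=
        ENNReal.tsum_comm
    _ = ∑' k : ℕ, ∑' j : ℕ, (if k ∈ Finset.range ((j+k)+1) then ENNReal.ofReal
          (((j+k).choose k : ℝ) * κ ^ ((j+k)-k) * ((1-κ)^(k+2) * fret P (k+2) x x) * z^((j+k)+2)) else 0) := by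
        refine tsum_congr fun k => ?_
        refine (Function.Injective.tsum_eq (g := fun j => j + k)
          (add_left_injective k) ?_).symm
        intro m hm
        rw [Function.mem_support] at hm
        by_cases hkm : k ≤ m
        · exact ⟨m - k, by show m - k + k = m; omega⟩
        · exfalso
          apply hm
          rw [if_neg]
          simp only [Finset.mem_range]
          omega
    _ = ∑' k : ℕ, ENNReal.ofReal (fret P (k+2) x x * ((1-κ)*z)^(k+2) / (1-κ*z)^(k+1)) := by
        refine tsum_congr fun k => ?_
        have hpt : ∀ j : ℕ, (if k ∈ Finset.range ((j+k)+1) then ENNReal.ofReal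
              (((j+k).choose k : ℝ) * κ ^ ((j+k)-k) * ((1-κ)^(k+2) * fret P (k+2) x x) * z^((j+k)+2)) else 0)
            = ENNReal.ofReal (((j+k).choose k : ℝ) * (κ*z)^j)
                * ENNReal.ofReal ((1-κ)^(k+2) * fret P (k+2) x x * z^(k+2)) := by
          intro j
          rw [if_pos (Finset.mem_range.mpr (by omega)),
            ← ENNReal.ofReal_mul (mul_nonneg (Nat.cast_nonneg _) (pow_nonneg hκz0 _))]
          congr 1
          have hjk : (j+k) - k = j := by omega
          rw [hjk, mul_pow]
          ring
        rw [tsum_congr hpt, ENNReal.tsum_mul_right, tsum_choose_geom_ennreal k hκz0 hκz,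
          ← ENNReal.ofReal_mul (by
            have : (0:ℝ) ≤ 1 - κ*z := by linarith
            positivity)]
        congr 1
        have hden : (0:ℝ) < 1 - κ*z := by linarith
        rw [mul_pow]
        field_simp

lemma master (hP : IsTransProb P) (hκ : κ ∈ Set.Ico (0:ℝ) 1) (x : S)
    {z : ℝ} (hz : 0 ≤ z) (hκz : κ * z < 1) :
    Ufun (lazy P Set.univ κ) x x z
      = ENNReal.ofReal (1 - κ * z) * Ufun P x x ((1 - κ) * z / (1 - κ * z))
        + ENNReal.ofReal (κ * z) := by
  obtain ⟨hκ0, hκ1⟩ := hκ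
  have hden : (0:ℝ) < 1 - κ*z := by linarith
  have h1κ : (0:ℝ) ≤ 1 - κ := by linarith
  set w : ℝ := (1 - κ) * z / (1 - κ * z) with hwdef
  have hw0 : 0 ≤ w := div_nonneg (mul_nonneg h1κ hz) (le_of_lt hden)
  have hQ : IsTransProb (lazy P Set.univ κ) := lazy_isTransProb hP ⟨hκ0, hκ1⟩
  -- expand LHS
  have hL : Ufun (lazy P Set.univ κ) x x z
      = ENNReal.ofReal (κ * z) + ENNReal.ofReal (P x x * ((1-κ) * z))
        + ∑' k : ℕ, ENNReal.ofReal
            (fret P (k+2) x x * ((1-κ)*z)^(k+2) / (1-κ*z)^(k+1)) := by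
    rw [show Ufun (lazy P Set.univ κ) x x z
        = ∑' n : ℕ, ENNReal.ofReal (fret (lazy P Set.univ κ) n x x * z ^ n) from rfl,
      tsum_eq_zero_add' ENNReal.summable, tsum_eq_zero_add' ENNReal.summable]
    have h0 : ENNReal.ofReal (fret (lazy P Set.univ κ) 0 x x * z ^ 0) = 0 := by
      simp [fret_zero]
    have h1 : ENNReal.ofReal (fret (lazy P Set.univ κ) (0+1) x x * z ^ (0+1))
        = ENNReal.ofReal (κ * z) + ENNReal.ofReal (P x x * ((1-κ) * z)) := by
      rw [show (0:ℕ)+1 = 1 from rfl, fret_one, lazy_univ_apply, if_pos rfl,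
        ← ENNReal.ofReal_add (mul_nonneg hκ0 hz)
          (mul_nonneg (hP.1 x x) (mul_nonneg h1κ hz))]
      congr 1
      ring
    rw [h0, h1, zero_add]
    congr 1
    rw [show (∑' n : ℕ, ENNReal.ofReal (fret (lazy P Set.univ κ) (n+1+1) x x * z ^ (n+1+1)))
        = ∑' m : ℕ, ENNReal.ofReal (fret (lazy P Set.univ κ) (m+2) x x * z ^ (m+2)) from rfl,
      tail_eval hP ⟨hκ0, hκ1⟩ x hz hκz]
  -- expand RHS
  have hR : ENNReal.ofReal (1 - κ * z) * Ufun P x x w + ENNReal.ofReal (κ * z)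
      = ENNReal.ofReal (κ * z) + ENNReal.ofReal (P x x * ((1-κ) * z))
        + ∑' k : ℕ, ENNReal.ofReal
            (fret P (k+2) x x * ((1-κ)*z)^(k+2) / (1-κ*z)^(k+1)) := by
    rw [show Ufun P x x w = ∑' n : ℕ, ENNReal.ofReal (fret P n x x * w ^ n) from rfl,
      tsum_eq_zero_add' ENNReal.summable, tsum_eq_zero_add' ENNReal.summable]
    have h0 : ENNReal.ofReal (fret P 0 x x * w ^ 0) = 0 := by simp [fret_zero]
    have h1 : ENNReal.ofReal (1 - κ * z) * ENNReal.ofReal (fret P (0+1) x x * w ^ (0+1))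
        = ENNReal.ofReal (P x x * ((1-κ) * z)) := by
      rw [show (0:ℕ)+1 = 1 from rfl, fret_one,
        ← ENNReal.ofReal_mul (le_of_lt hden)]
      congr 1
      rw [hwdef]
      field_simp
    have h2 : ∀ k : ℕ, ENNReal.ofReal (1 - κ * z) * ENNReal.ofReal (fret P (k+1+1) x x * w ^ (k+1+1))
        = ENNReal.ofReal (fret P (k+2) x x * ((1-κ)*z)^(k+2) / (1-κ*z)^(k+1)) := by
      intro k
      rw [← ENNReal.ofReal_mul (le_of_lt hden)]
      congr 1
      rw [hwdef, div_pow, show k+1+1 = k+2 from rfl]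
      rw [mul_pow]
      field_simp
      ring
    rw [h0, zero_add, mul_add, h1, ← ENNReal.tsum_mul_left, tsum_congr h2]
    ring
  rw [hL, hR]

end Master

section Radius
variable {P : S → S → ℝ} {κ : ℝ}

lemma kappa_mul_lt_one [Infinite S] (hP : IsTransProb P) (hirr : Irred P)
    (hκ : κ ∈ Set.Ico (0:ℝ) 1) (x : S) {z : ℝ} (hz : 0 ≤ z)
    (hsum : Summable (fun n => fret (lazy P Set.univ κ) n x x * z ^ n)) :
    κ * z < 1 := by
  obtain ⟨hκ0, hκ1⟩ := hκ
  by_contra hc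
  push_neg at hc
  have hzpos : 0 < z := by nlinarith
  obtain ⟨k0, hk0⟩ := exists_fret_self_pos hP hirr x
  set δ : ℝ := ((1-κ)*z)^(k0+2) * fret P (k0+2) x x with hδ
  have hδpos : 0 < δ := mul_pos (pow_pos (mul_pos (by linarith) hzpos) _) hk0
  have hbound : ∀ m, k0 ≤ m →
      δ ≤ fret (lazy P Set.univ κ) (m+2) x x * z^(m+2) := by
    intro m hm
    have h1 : ((m.choose k0 : ℝ)) * κ ^ (m-k0) * ((1-κ)^(k0+2) * fret P (k0+2) x x)
        ≤ fret (lazy P Set.univ κ) (m+2) x x := by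
      rw [fret_lazy_self hP ⟨hκ0, hκ1⟩ x m]
      refine Finset.single_le_sum
        (f := fun k => (m.choose k : ℝ) * κ ^ (m-k) * ((1-κ)^(k+2) * fret P (k+2) x x))
        (fun k _ => ?_) (Finset.mem_range.mpr (by omega))
      exact mul_nonneg (mul_nonneg (Nat.cast_nonneg _) (pow_nonneg hκ0 _))
        (mul_nonneg (pow_nonneg (by linarith) _) (fret_nonneg hP _ x x))
    have h2 : δ ≤ ((m.choose k0 : ℝ) * κ ^ (m-k0) * ((1-κ)^(k0+2) * fret P (k0+2) x x)) * z^(m+2) := by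
      have e : ((m.choose k0 : ℝ) * κ ^ (m-k0) * ((1-κ)^(k0+2) * fret P (k0+2) x x)) * z^(m+2)
          = ((m.choose k0 : ℝ) * (κ*z)^(m-k0)) * δ := by
        have hzsplit : z^(m+2) = z^(m-k0) * z^(k0+2) := by
          rw [← pow_add]; congr 1; omega
        rw [hδ, hzsplit, mul_pow, mul_pow]
        ring
      rw [e]
      have hc1 : (1:ℝ) ≤ (m.choose k0 : ℝ) := by
        exact_mod_cast Nat.succ_le_of_lt (Nat.choose_pos hm)
      have hc2 : (1:ℝ) ≤ (κ*z)^(m-k0) := one_le_pow₀ hc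
      have h3 : (1:ℝ) ≤ (m.choose k0 : ℝ) * (κ*z)^(m-k0) := by nlinarith
      calc δ = 1 * δ := (one_mul δ).symm
        _ ≤ ((m.choose k0 : ℝ) * (κ*z)^(m-k0)) * δ :=
            mul_le_mul_of_nonneg_right h3 (le_of_lt hδpos)
    calc δ ≤ ((m.choose k0 : ℝ) * κ ^ (m-k0) * ((1-κ)^(k0+2) * fret P (k0+2) x x)) * z^(m+2) := h2
      _ ≤ fret (lazy P Set.univ κ) (m+2) x x * z^(m+2) :=
          mul_le_mul_of_nonneg_right h1 (pow_nonneg (le_of_lt hzpos) _)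
  have htend : Filter.Tendsto
      (fun m => fret (lazy P Set.univ κ) (m+2) x x * z^(m+2)) Filter.atTop (nhds 0) :=
    hsum.tendsto_atTop_zero.comp (Filter.tendsto_add_atTop_nat 2)
  have hev := (htend.eventually_lt_const hδpos).and (Filter.eventually_ge_atTop k0)
  obtain ⟨m, hm1, hm2⟩ := hev.exists
  linarith [hbound m hm2]

lemma inv_rel {κ zr wr : ℝ} (hκ0 : 0 ≤ κ) (hκ1 : κ < 1) (hz : 0 < zr)
    (hκz : κ * zr < 1) (hwr : wr = (1-κ)*zr/(1-κ*zr)) :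
    (ENNReal.ofReal zr)⁻¹
      = ENNReal.ofReal κ + ENNReal.ofReal (1-κ) * (ENNReal.ofReal wr)⁻¹ := by
  have hden : (0:ℝ) < 1 - κ*zr := by linarith
  have h1κ : (0:ℝ) < 1 - κ := by linarith
  have hw : 0 < wr := hwr ▸ div_pos (mul_pos h1κ hz) hden
  rw [← ENNReal.ofReal_inv_of_pos hz, ← ENNReal.ofReal_inv_of_pos hw,
    ← ENNReal.ofReal_mul (le_of_lt h1κ),
    ← ENNReal.ofReal_add hκ0 (mul_nonneg (le_of_lt h1κ) (inv_nonneg.mpr (le_of_lt hw)))]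
  congr 1
  rw [hwr]
  have hzne : zr ≠ 0 := ne_of_gt hz
  have hdne : 1 - κ*zr ≠ 0 := ne_of_gt hden
  have h1κne : 1 - κ ≠ 0 := ne_of_gt h1κ
  field_simp
  ring

end Radius

theorem Ufun_global_lazy {S : Type*} [Countable S] [Infinite S] (P : S → S → ℝ)
    (hP : IsTransProb P) (hirr : Irred P)
    (κ : ℝ) (hκ : κ ∈ Set.Ico (0 : ℝ) 1) (x : S) :
    (∀ z : ℝ, 0 ≤ z → ENNReal.ofReal z < rU (lazy P Set.univ κ) x x →
      Ufun (lazy P Set.univ κ) x x z =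
        ENNReal.ofReal (1 - κ * z) * Ufun P x x ((1 - κ) * z / (1 - κ * z)) +
          ENNReal.ofReal (κ * z)) ∧
    (rU (lazy P Set.univ κ) x x)⁻¹ =
      ENNReal.ofReal κ + ENNReal.ofReal (1 - κ) * (rU P x x)⁻¹ := by
  have hκ0 : (0:ℝ) ≤ κ := hκ.1
  have hκ1 : κ < 1 := hκ.2
  have h1κ : (0:ℝ) < 1 - κ := by linarith
  have hQ : IsTransProb (lazy P Set.univ κ) := lazy_isTransProb hP hκ
  constructor
  · intro z hz hlt
    unfold rU convRadius at hlt
    obtain ⟨z', hz'⟩ := lt_iSup_iff.mp hlt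
    by_cases hs : Summable (fun n => fret (lazy P Set.univ κ) n x x * ((z' : ℝ)) ^ n)
    · rw [iSup_pos hs] at hz'
      have hzz' : z < (z' : ℝ) := by
        rw [← ENNReal.ofReal_coe_nnreal] at hz'
        exact (ENNReal.ofReal_lt_ofReal_iff_of_nonneg hz).mp hz'
      have hkz' : κ * (z' : ℝ) < 1 := kappa_mul_lt_one hP hirr hκ x z'.coe_nonneg hs
      have hκz : κ * z < 1 :=
        lt_of_le_of_lt (mul_le_mul_of_nonneg_left (le_of_lt hzz') hκ0) hkz'
      exact master hP hκ x hz hκz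
    · rw [iSup_neg hs] at hz'
      exact absurd hz' (by simp)
  · have hA0 : Summable (fun n => fret (lazy P Set.univ κ) n x x * ((0:ℝ≥0) : ℝ) ^ n) := by
      apply summable_of_ne_finset_zero (s := ({0} : Finset ℕ))
      intro n hn
      simp only [Finset.mem_singleton] at hn
      rw [NNReal.coe_zero, zero_pow hn, mul_zero]
    have hB0 : Summable (fun n => fret P n x x * ((0:ℝ≥0) : ℝ) ^ n) := by
      apply summable_of_ne_finset_zero (s := ({0} : Finset ℕ))
      intro n hn
      simp only [Finset.mem_singleton] at hn
      rw [NNReal.coe_zero, zero_pow hn, mul_zero]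
    have hrQ : (rU (lazy P Set.univ κ) x x)⁻¹
        = ⨅ (z : ℝ≥0) (_ : Summable fun n => fret (lazy P Set.univ κ) n x x * (z:ℝ) ^ n),
            ((z : ℝ≥0∞))⁻¹ := by
      unfold rU convRadius
      rw [ENNReal.inv_iSup]
      exact iInf_congr fun z => ENNReal.inv_iSup _
    have hrP : (rU P x x)⁻¹
        = ⨅ (w : ℝ≥0) (_ : Summable fun n => fret P n x x * (w:ℝ) ^ n),
            ((w : ℝ≥0∞))⁻¹ := by
      unfold rU convRadius
      rw [ENNReal.inv_iSup]
      exact iInf_congr fun w => ENNReal.inv_iSup _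
    rw [hrQ, hrP]
    refine le_antisymm ?_ ?_
    · rw [iInf_subtype' (p := fun w : ℝ≥0 => Summable fun n => fret P n x x * (w:ℝ) ^ n)]
      haveI : Nonempty {w : ℝ≥0 // Summable fun n => fret P n x x * (w:ℝ) ^ n} := ⟨⟨0, hB0⟩⟩
      rw [ENNReal.mul_iInf (fun h => absurd h ENNReal.ofReal_ne_top), ENNReal.add_iInf]
      refine le_iInf ?_
      rintro ⟨w, hw⟩
      by_cases hw0 : w = 0
      · subst hw0
        have hT : ENNReal.ofReal (1-κ) * (((0:ℝ≥0) : ℝ≥0∞))⁻¹ = ⊤ := by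
          rw [ENNReal.coe_zero, ENNReal.inv_zero,
            ENNReal.mul_top (ne_of_gt (ENNReal.ofReal_pos.mpr h1κ))]
        rw [hT, add_top]
        exact le_top
      · have hwpos : 0 < (w : ℝ) := NNReal.coe_pos.mpr (zero_lt_iff.mpr hw0)
        set d : ℝ := (1-κ) + κ * (w:ℝ) with hd
        have hdpos : 0 < d := by
          have := mul_nonneg hκ0 w.coe_nonneg
          rw [hd]; linarith
        set zr : ℝ := (w:ℝ) / d with hzr
        have hzrpos : 0 < zr := div_pos hwpos hdpos
        have hκzr : κ * zr < 1 := by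
          have he : κ * zr = κ * (w:ℝ) / d := by rw [hzr]; ring
          rw [he, div_lt_one hdpos, hd]
          linarith
        have hwrback : (w:ℝ) = (1-κ) * zr / (1 - κ * zr) := by
          have hdne : d ≠ 0 := ne_of_gt hdpos
          have h2 : 1 - κ * zr = (1-κ)/d := by
            rw [hzr, hd]; field_simp; ring
          rw [h2, hzr]
          field_simp
        have hUfin : Ufun P x x (w:ℝ) ≠ ∞ := by
          rw [show Ufun P x x (w:ℝ) = ∑' n, ENNReal.ofReal (fret P n x x * (w:ℝ)^n) from rfl]
          exact (summable_iff_tsum_ofReal_ne_top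
            (fun n => mul_nonneg (fret_nonneg hP n x x) (pow_nonneg w.coe_nonneg n))).mp hw
        have hQfin : Ufun (lazy P Set.univ κ) x x zr ≠ ∞ := by
          rw [master hP hκ x (le_of_lt hzrpos) hκzr, ← hwrback]
          exact ENNReal.add_ne_top.mpr
            ⟨ENNReal.mul_ne_top ENNReal.ofReal_ne_top hUfin, ENNReal.ofReal_ne_top⟩
        have hAz : Summable (fun n =>
            fret (lazy P Set.univ κ) n x x * ((zr.toNNReal : ℝ≥0) : ℝ) ^ n) := by
          rw [Real.coe_toNNReal _ (le_of_lt hzrpos)]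
          exact (summable_iff_tsum_ofReal_ne_top
            (fun n => mul_nonneg (fret_nonneg hQ n x x) (pow_nonneg (le_of_lt hzrpos) n))).mpr hQfin
        refine le_trans (iInf₂_le zr.toNNReal hAz) ?_
        rw [← ENNReal.ofReal_coe_nnreal (p := zr.toNNReal),
          ← ENNReal.ofReal_coe_nnreal (p := w),
          Real.coe_toNNReal _ (le_of_lt hzrpos),
          inv_rel hκ0 hκ1 hzrpos hκzr hwrback]
    · refine le_iInf₂ fun z hz => ?_
      by_cases hz0 : z = 0
      · subst hz0
        rw [ENNReal.coe_zero, ENNReal.inv_zero]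
        exact le_top
      · have hzpos : 0 < (z : ℝ) := NNReal.coe_pos.mpr (zero_lt_iff.mpr hz0)
        have hκz : κ * (z:ℝ) < 1 := kappa_mul_lt_one hP hirr hκ x z.coe_nonneg hz
        have hden : (0:ℝ) < 1 - κ * z := by linarith
        set wr : ℝ := (1-κ) * (z:ℝ) / (1 - κ * (z:ℝ)) with hwr
        have hwrpos : 0 < wr := div_pos (mul_pos h1κ hzpos) hden
        have hQU : Ufun (lazy P Set.univ κ) x x (z:ℝ) ≠ ∞ :=
          (summable_iff_tsum_ofReal_ne_top
            (fun n => mul_nonneg (fret_nonneg hQ n x x) (pow_nonneg z.coe_nonneg n))).mp hz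
        have hPU : Ufun P x x wr ≠ ∞ := by
          rw [master hP hκ x z.coe_nonneg hκz] at hQU
          have h5 := (ENNReal.add_ne_top.mp hQU).1
          intro habs
          rw [← hwr] at h5
          rw [habs, ENNReal.mul_top (ne_of_gt (ENNReal.ofReal_pos.mpr hden))] at h5
          exact h5 rfl
        have hBw : Summable (fun n => fret P n x x * ((wr.toNNReal : ℝ≥0) : ℝ) ^ n) := by
          rw [Real.coe_toNNReal _ (le_of_lt hwrpos)]
          exact (summable_iff_tsum_ofReal_ne_top
            (fun n => mul_nonneg (fret_nonneg hP n x x) (pow_nonneg (le_of_lt hwrpos) n))).mpr hPU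
        calc ENNReal.ofReal κ + ENNReal.ofReal (1-κ)
              * (⨅ (w : ℝ≥0) (_ : Summable fun n => fret P n x x * (w:ℝ) ^ n), ((w : ℝ≥0∞))⁻¹)
            ≤ ENNReal.ofReal κ + ENNReal.ofReal (1-κ) * ((wr.toNNReal : ℝ≥0∞))⁻¹ := by
              gcongr; exact iInf₂_le wr.toNNReal hBw
          _ = ((z : ℝ≥0∞))⁻¹ := by
              rw [← ENNReal.ofReal_coe_nnreal (p := z),
                ← ENNReal.ofReal_coe_nnreal (p := wr.toNNReal),
                Real.coe_toNNReal _ (le_of_lt hwrpos)]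
              exact (inv_rel hκ0 hκ1 hzpos hκz hwr).symm
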